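/- Let E be a real Hilbert space and let L be an orthomodular lattice admitting a strong set of E-valued states. Then for every n ≥ 2, all a, b : Fin n → L with a(i) ⊥ a(j) for all i ≠ j and a(i) ⊥ b(i) for all i, and every r ∈ L with r ⊥ ⨆_i a(i), equation E*ₙ holds: ((⨆_i a(i)) ∪ r) ∩ ⨅_i (a(i) ∪ b(i)) ≤ (⨆_i b(i)) ∪ r. -/

import Mathlib

/-- An ortholattice: a bounded lattice with an orthocomplementation. -/
class Ortholattice (α : Type*) extends Lattice α, BoundedOrder α where
  ocompl : α → α
  sup_ocompl : ∀ a : α, a ⊔ ocompl a = ⊤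
  inf_ocompl : ∀ a : α, a ⊓ ocompl a = ⊥
  ocompl_anti : ∀ a b : α, a ≤ b → ocompl b ≤ ocompl a
  ocompl_ocompl : ∀ a : α, ocompl (ocompl a) = a

postfix:max "ᗮ" => Ortholattice.ocompl

/-- An orthomodular lattice. -/
class OrthomodularLattice (α : Type*) extends Ortholattice α where
  orthomodular : ∀ a b : α, a ≤ b → b = a ⊔ (aᗮ ⊓ b)

/-- The Sasaki hook `x → y = x′ ∪ (x ∩ y)`. -/
def oimp {α : Type*} [Ortholattice α] (x y : α) : α := xᗮ ⊔ (x ⊓ y)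

/-- An `E`-valued state on an ortholattice, for a real Hilbert space `E`. -/
structure HState (E : Type*) [NormedAddCommGroup E] [InnerProductSpace ℝ E]
    (α : Type*) [Ortholattice α] where
  val : α → E
  norm_top : ‖val ⊤‖ = 1
  additive : ∀ a b : α, a ≤ bᗮ → val (a ⊔ b) = val a + val b
  orthogonal : ∀ a b : α, a ≤ bᗮ → (inner ℝ (val a) (val b) : ℝ) = 0

/-- A strong set of `E`-valued states. -/
def IsStrongHSet {E : Type*} [NormedAddCommGroup E] [InnerProductSpace ℝ E]
    {α : Type*} [Ortholattice α] (S : Set (HState E α)) : Prop :=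
  ∀ a b : α, (∀ s ∈ S, ‖s.val a‖ = 1 → ‖s.val b‖ = 1) → a ≤ b

open RealInnerProductSpace

section Helpers
variable {E : Type*} [NormedAddCommGroup E] [InnerProductSpace ℝ E]
  {α : Type*} [OrthomodularLattice α] (s : HState E α)

lemma le_ocompl_swap {x y : α} (h : y ≤ xᗮ) : x ≤ yᗮ := by
  have := Ortholattice.ocompl_anti _ _ h
  rwa [Ortholattice.ocompl_ocompl] at this

lemma HState.decomp {x y : α} (h : x ≤ y) :
    s.val y = s.val x + s.val (xᗮ ⊓ y) ∧ (inner ℝ (s.val x) (s.val (xᗮ ⊓ y)) : ℝ) = 0 := by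
  have h2 : x ≤ (xᗮ ⊓ y)ᗮ := le_ocompl_swap inf_le_left
  have h3 := OrthomodularLattice.orthomodular x y h
  refine ⟨?_, s.orthogonal _ _ h2⟩
  conv_lhs => rw [h3]
  exact s.additive _ _ h2

lemma HState.norm_sq_decomp {x y : α} (h : x ≤ y) :
    ‖s.val y‖^2 = ‖s.val x‖^2 + ‖s.val (xᗮ ⊓ y)‖^2 := by
  obtain ⟨he, ho⟩ := s.decomp h
  rw [he, norm_add_sq_real, ho]; ring

lemma HState.val_bot : s.val ⊥ = 0 := by
  have h := s.additive ⊥ ⊥ bot_le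
  rw [sup_idem] at h
  exact left_eq_add.mp h

lemma HState.norm_le_one (x : α) : ‖s.val x‖ ≤ 1 := by
  have h := s.norm_sq_decomp (le_top (a := x))
  rw [s.norm_top] at h
  nlinarith [norm_nonneg (s.val x), sq_nonneg ‖s.val (xᗮ ⊓ ⊤)‖]

lemma HState.eq_of_norm_one {x y : α} (h : x ≤ y) (hx : ‖s.val x‖ = 1) :
    s.val y = s.val x := by
  obtain ⟨he, _⟩ := s.decomp h
  have h2 := s.norm_sq_decomp h
  have h3 : ‖s.val y‖ ≤ 1 := s.norm_le_one y
  have h4 : ‖s.val (xᗮ ⊓ y)‖ = 0 := by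
    nlinarith [norm_nonneg (s.val y), norm_nonneg (s.val (xᗮ ⊓ y))]
  rw [he, norm_eq_zero.mp h4, add_zero]

lemma HState.inner_of_le {x y : α} (h : x ≤ y) :
    (inner ℝ (s.val y) (s.val x) : ℝ) = ‖s.val x‖^2 := by
  obtain ⟨he, ho⟩ := s.decomp h
  rw [he, inner_add_left, real_inner_self_eq_norm_sq, real_inner_comm, ho, add_zero]

lemma HState.sup_sum {ι : Type*} (t : Finset ι) (a : ι → α)
    (h : ∀ i ∈ t, ∀ j ∈ t, i ≠ j → a i ≤ (a j)ᗮ) :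
    s.val (t.sup a) = ∑ i ∈ t, s.val (a i) := by
  induction t using Finset.cons_induction with
  | empty => simpa using s.val_bot
  | cons i t hit ih =>
    have hsup : t.sup a ≤ (a i)ᗮ := Finset.sup_le fun j hj =>
      h j (Finset.mem_cons_of_mem hj) i (Finset.mem_cons_self i t)
        (fun hji => hit (hji ▸ hj))
    rw [Finset.sup_cons, Finset.sum_cons, s.additive _ _ (le_ocompl_swap hsup),
      ih (fun i hi j hj => h i (Finset.mem_cons_of_mem hi) j (Finset.mem_cons_of_mem hj))]

end Helpers

theorem EstarN_of_strong_hilbert_states {E : Type*} [NormedAddCommGroup E]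
    [InnerProductSpace ℝ E] [CompleteSpace E]
    {α : Type*} [OrthomodularLattice α]
    (S : Set (HState E α)) (hS : IsStrongHSet S)
    (n : ℕ) (hn : 2 ≤ n) (a b : Fin n → α) (r : α)
    (haa : ∀ i j : Fin n, i ≠ j → a i ≤ (a j)ᗮ)
    (hab : ∀ i : Fin n, a i ≤ (b i)ᗮ)
    (hr : r ≤ (Finset.univ.sup a)ᗮ) :
    (Finset.univ.sup a ⊔ r) ⊓ Finset.univ.inf (fun i => a i ⊔ b i) ≤
      Finset.univ.sup b ⊔ r := by
  set A := Finset.univ.sup a with hA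
  set c := (A ⊔ r) ⊓ Finset.univ.inf (fun i => a i ⊔ b i) with hc
  set p := Finset.univ.sup b ⊔ r with hp
  apply hS
  intro s _ hcs
  set u := s.val c with hu
  -- decomposition over the a's and r
  have hAr : A ≤ rᗮ := le_ocompl_swap hr
  have hsAr : s.val (A ⊔ r) = u := s.eq_of_norm_one inf_le_left hcs
  have hAsum : s.val A = ∑ i, s.val (a i) :=
    s.sup_sum _ _ (fun i _ j _ hij => haa i j hij)
  have hur : ∑ i, s.val (a i) + s.val r = u := by
    rw [← hAsum, ← s.additive A r hAr, hsAr]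
  -- per-index facts
  have hci : ∀ i, c ≤ a i ⊔ b i := fun i =>
    le_trans inf_le_right (Finset.inf_le (Finset.mem_univ i))
  have hui : ∀ i, s.val (a i) + s.val (b i) = u := fun i => by
    rw [← s.additive _ _ (hab i), s.eq_of_norm_one (hci i) hcs]
  have hbsq : ∀ i, ‖s.val (b i)‖^2 = 1 - ‖s.val (a i)‖^2 := by
    intro i
    have h1 := s.orthogonal _ _ (hab i)
    have h2 : ‖s.val (a i) + s.val (b i)‖ = 1 := by rw [hui i]; exact hcs
    have h3 := norm_add_sq_real (s.val (a i)) (s.val (b i))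
    rw [h1, h2] at h3
    linarith
  have hua : ∀ i, (inner ℝ u (s.val (a i)) : ℝ) = ‖s.val (a i)‖^2 := fun i => by
    rw [← hsAr]
    exact s.inner_of_le (le_trans (Finset.le_sup (Finset.mem_univ i)) le_sup_left)
  have hurr : (inner ℝ u (s.val r) : ℝ) = ‖s.val r‖^2 := by
    rw [← hsAr]; exact s.inner_of_le le_sup_right
  have hnorm1 : ∑ i, ‖s.val (a i)‖^2 + ‖s.val r‖^2 = 1 := by
    have h1 : (inner ℝ u (∑ i, s.val (a i) + s.val r) : ℝ) = 1 := by
      rw [hur, real_inner_self_eq_norm_sq, hcs]; norm_num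
    rw [inner_add_right, inner_sum] at h1
    simp only [hua, hurr] at h1
    linarith
  -- inner products with p
  have hpb : ∀ i, (inner ℝ (s.val p) (s.val (b i)) : ℝ) = ‖s.val (b i)‖^2 := fun i =>
    s.inner_of_le (le_trans (Finset.le_sup (Finset.mem_univ i)) le_sup_left)
  have hpr : (inner ℝ (s.val p) (s.val r) : ℝ) = ‖s.val r‖^2 :=
    s.inner_of_le le_sup_right
  set t := (inner ℝ (s.val p) u : ℝ) with ht
  have e1 : ∑ i : Fin n, (inner ℝ (s.val p) (s.val (a i)) : ℝ) = t - ‖s.val r‖^2 := by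
    have hsa : ∑ i, s.val (a i) = u - s.val r := by rw [← hur]; abel
    rw [← inner_sum, hsa, inner_sub_right, hpr]
  have e2 : ∑ i : Fin n, (inner ℝ (s.val p) (s.val (b i)) : ℝ) = n - (1 - ‖s.val r‖^2) := by
    simp only [hpb, hbsq]
    rw [Finset.sum_sub_distrib, Finset.sum_const, Finset.card_univ, Fintype.card_fin,
      nsmul_eq_mul, mul_one]
    linarith [hnorm1]
  have e4 : (n : ℝ) * t = (t - ‖s.val r‖^2) + (n - (1 - ‖s.val r‖^2)) := by
    rw [← e1, ← e2, ← Finset.sum_add_distrib]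
    have : ∀ i : Fin n, (inner ℝ (s.val p) (s.val (a i)) : ℝ)
        + (inner ℝ (s.val p) (s.val (b i)) : ℝ) = t := fun i => by
      rw [← inner_add_right, hui i]
    simp only [this, Finset.sum_const, Finset.card_univ, Fintype.card_fin, nsmul_eq_mul]
  have ht1 : t = 1 := by
    have hmul : ((n : ℝ) - 1) * (t - 1) = 0 := by ring_nf; linarith [e4]
    have hne : ((n : ℝ) - 1) ≠ 0 := by
      have : (2 : ℝ) ≤ n := by exact_mod_cast hn
      linarith
    have := mul_eq_zero.mp hmul
    rcases this with h | h
    · exact absurd h hne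
    · linarith
  have hle : t ≤ ‖s.val p‖ * ‖u‖ := real_inner_le_norm _ _
  rw [hcs, mul_one] at hle
  have hp1 : ‖s.val p‖ ≤ 1 := s.norm_le_one p
  show ‖s.val p‖ = 1
  linarith
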